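/- arXiv:1411.2673 — 2 statements merged into one kernel-verified Lean document; each statement's English description precedes it below -/
import Mathlib

section
/- Any minimizer γ of E(γ) = ∫ d(x, Γ_γ)^p dμ(x) + λ·L(γ) over 1-Lipschitz curves has image contained in the convex hull of the support of μ. -/
open Metric Set MeasureTheory
open scoped RealInnerProductSpace



variable {F : Type*} [NormedAddCommGroup F] [InnerProductSpace ℝ F]

lemma pythag (z pz w pw : F) (h1 : ⟪z - pz, pw - pz⟫ ≤ 0)
    (h2 : ⟪w - pw, pz - pw⟫ ≤ 0) :
    ‖pz - pw‖ ^ 2 + (‖z - pz‖ - ‖w - pw‖) ^ 2 ≤ ‖z - w‖ ^ 2 := by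
  have e : z - w = (pz - pw) + ((z - pz) - (w - pw)) := by abel
  have hnorm : ‖z - w‖ ^ 2 = ‖pz - pw‖ ^ 2 + 2 * ⟪pz - pw, (z - pz) - (w - pw)⟫
      + ‖(z - pz) - (w - pw)‖ ^ 2 := by
    rw [e, @norm_add_sq_real]
  have hcross : 0 ≤ ⟪pz - pw, (z - pz) - (w - pw)⟫ := by
    rw [inner_sub_right]
    have c1 : 0 ≤ ⟪pz - pw, z - pz⟫ := by
      have := h1
      rw [real_inner_comm] at this
      have : ⟪pw - pz, z - pz⟫ ≤ 0 := by rwa [real_inner_comm]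
      have h' : ⟪pz - pw, z - pz⟫ = -⟪pw - pz, z - pz⟫ := by
        rw [show pz - pw = -(pw - pz) by abel, inner_neg_left]
      linarith
    have c2 : ⟪pz - pw, w - pw⟫ ≤ 0 := by rwa [real_inner_comm] at h2
    linarith
  have htri : (‖z - pz‖ - ‖w - pw‖) ^ 2 ≤ ‖(z - pz) - (w - pw)‖ ^ 2 := by
    have h := abs_norm_sub_norm_le (z - pz) (w - pw)
    have := abs_nonneg (‖z - pz‖ - ‖w - pw‖)
    nlinarith [sq_abs (‖z - pz‖ - ‖w - pw‖)]
  nlinarith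

lemma minkowski_two (a b c e : ℝ) :
    Real.sqrt ((a + c) ^ 2 + (b + e) ^ 2) ≤ Real.sqrt (a ^ 2 + b ^ 2) + Real.sqrt (c ^ 2 + e ^ 2) := by
  have key : a * c + b * e ≤ Real.sqrt ((a ^ 2 + b ^ 2) * (c ^ 2 + e ^ 2)) := by
    rcases le_or_gt (a * c + b * e) 0 with h | h
    · exact h.trans (Real.sqrt_nonneg _)
    · have h2 : (a * c + b * e) ^ 2 ≤ (a ^ 2 + b ^ 2) * (c ^ 2 + e ^ 2) := by
        nlinarith [sq_nonneg (a * e - b * c)]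
      calc a * c + b * e = Real.sqrt ((a * c + b * e) ^ 2) := by
            rw [Real.sqrt_sq h.le]
        _ ≤ _ := Real.sqrt_le_sqrt h2
  have h1 := Real.sq_sqrt (by positivity : (0:ℝ) ≤ a ^ 2 + b ^ 2)
  have h2 := Real.sq_sqrt (by positivity : (0:ℝ) ≤ c ^ 2 + e ^ 2)
  have h3 := Real.sqrt_nonneg (a ^ 2 + b ^ 2)
  have h4 := Real.sqrt_nonneg (c ^ 2 + e ^ 2)
  have h5 : Real.sqrt ((a^2+b^2) * (c^2+e^2)) = Real.sqrt (a^2+b^2) * Real.sqrt (c^2+e^2) :=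
    Real.sqrt_mul (by positivity) _
  rw [show (a + c) ^ 2 + (b + e) ^ 2 = a^2+b^2 + (c^2+e^2) + 2*(a*c+b*e) by ring]
  have : a^2+b^2 + (c^2+e^2) + 2*(a*c+b*e) ≤ (Real.sqrt (a^2+b^2) + Real.sqrt (c^2+e^2))^2 := by
    rw [add_sq]
    nlinarith
  calc Real.sqrt (a^2+b^2 + (c^2+e^2) + 2*(a*c+b*e))
      ≤ Real.sqrt ((Real.sqrt (a^2+b^2) + Real.sqrt (c^2+e^2))^2) := Real.sqrt_le_sqrt this
    _ = _ := Real.sqrt_sq (by positivity)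

lemma minkowski_sum (n : ℕ) (A B : ℕ → ℝ) :
    Real.sqrt ((∑ i ∈ Finset.range n, A i) ^ 2 + (∑ i ∈ Finset.range n, B i) ^ 2)
      ≤ ∑ i ∈ Finset.range n, Real.sqrt (A i ^ 2 + B i ^ 2) := by
  induction n with
  | zero => simp
  | succ n ih =>
      rw [Finset.sum_range_succ, Finset.sum_range_succ, Finset.sum_range_succ]
      calc Real.sqrt ((∑ i ∈ Finset.range n, A i + A n) ^ 2 + (∑ i ∈ Finset.range n, B i + B n) ^ 2)
          ≤ Real.sqrt ((∑ i ∈ Finset.range n, A i) ^ 2 + (∑ i ∈ Finset.range n, B i) ^ 2)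
            + Real.sqrt (A n ^ 2 + B n ^ 2) := minkowski_two _ _ _ _
        _ ≤ _ := by gcongr


lemma sqrt_arith {SA SB D V : ℝ} (h3 : SB ^ 2 = D ^ 2) (hA : 0 ≤ SA)
    (h : Real.sqrt (SA ^ 2 + SB ^ 2) ≤ V) : SA ≤ Real.sqrt (V ^ 2 - D ^ 2) := by
  have hnn : (0:ℝ) ≤ SA ^ 2 + SB ^ 2 := by positivity
  have h2 : SA ^ 2 + SB ^ 2 ≤ V ^ 2 := by
    have h4 := pow_le_pow_left₀ (Real.sqrt_nonneg _) h 2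
    rwa [Real.sq_sqrt hnn] at h4
  rw [Real.le_sqrt hA (by nlinarith)]
  nlinarith

lemma isCompact_convexHull_fd {d : ℕ} {s : Set (EuclideanSpace ℝ (Fin d))}
    (hs : IsCompact s) (hne : s.Nonempty) : IsCompact (convexHull ℝ s) := by
  classical
  obtain ⟨z₀, hz₀⟩ := hne
  set n := d + 1
  set φ : (Fin n → ℝ) × (Fin n → EuclideanSpace ℝ (Fin d)) → EuclideanSpace ℝ (Fin d) := fun q => ∑ i, q.1 i • q.2 i with hφ
  have hcont : Continuous φ := by
    apply continuous_finset_sum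
    intro i _
    exact ((continuous_apply i).comp continuous_fst).smul
      ((continuous_apply i).comp continuous_snd)
  have hK : IsCompact ((stdSimplex ℝ (Fin n)) ×ˢ (Set.univ.pi fun _ : Fin n => s)) :=
    (isCompact_stdSimplex ℝ _).prod (isCompact_univ_pi fun _ => hs)
  have himg : φ '' ((stdSimplex ℝ (Fin n)) ×ˢ (Set.univ.pi fun _ : Fin n => s))
      = convexHull ℝ s := by
    apply Set.Subset.antisymm
    · rintro x ⟨⟨w, z⟩, ⟨hw, hz⟩, rfl⟩
      exact Convex.sum_mem (convex_convexHull ℝ s) (fun i _ => hw.1 i) hw.2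
        (fun i _ => subset_convexHull ℝ s (hz i (mem_univ i)))
    · intro x hx
      obtain ⟨ι, hfin, z, w, hzs, hai, hwpos, hwsum, hrep⟩ :=
        eq_pos_convex_span_of_mem_convexHull hx
      have : Fintype.card ι ≤ n := by
        have hne : Nonempty ι := by
          by_contra hempty
          rw [not_nonempty_iff] at hempty
          rw [Finset.sum_of_isEmpty] at hwsum
          norm_num at hwsum
        have := hai.finrank_vectorSpan_add_one
        have hle : Module.finrank ℝ (vectorSpan ℝ (Set.range z)) ≤ Module.finrank ℝ (EuclideanSpace ℝ (Fin d)) :=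
          Submodule.finrank_le _
        rw [finrank_euclideanSpace_fin] at hle
        omega
      obtain ⟨e⟩ := Function.Embedding.nonempty_of_card_le
        (this.trans_eq (Fintype.card_fin n).symm)
      set W : Fin n → ℝ := fun j => if h : ∃ i, e i = j then w h.choose else 0 with hW
      set Z : Fin n → EuclideanSpace ℝ (Fin d) := fun j => if h : ∃ i, e i = j then z h.choose else z₀ with hZ
      have hWe : ∀ i : ι, W (e i) = w i := by
        intro i
        have h : ∃ i', e i' = e i := ⟨i, rfl⟩
        simp only [hW, dif_pos h]
        exact congrArg w (e.injective h.choose_spec)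
      have hZe : ∀ i : ι, Z (e i) = z i := by
        intro i
        have h : ∃ i', e i' = e i := ⟨i, rfl⟩
        simp only [hZ, dif_pos h]
        exact congrArg z (e.injective h.choose_spec)
      have hsum : ∀ (f : Fin n → ℝ) (g : Fin n → EuclideanSpace ℝ (Fin d)),
          True := fun _ _ => trivial
      refine ⟨(W, Z), ⟨?_, ?_⟩, ?_⟩
      · constructor
        · intro j
          simp only [hW]
          split
          · exact (hwpos _).le
          · exact le_refl 0
        · rw [← Finset.sum_subset (Finset.subset_univ (Finset.univ.image e))]
          · rw [Finset.sum_image (fun a _ b _ h => e.injective h)]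
            simp only [hWe]
            exact hwsum
          · intro j _ hj
            simp only [Finset.mem_image, Finset.mem_univ, true_and] at hj
            simp only [hW]
            rw [dif_neg]
            rintro ⟨i, rfl⟩
            exact hj ⟨i, rfl⟩
      · intro j _
        simp only [hZ]
        split
        · exact hzs (Set.mem_range_self _)
        · exact hz₀
      · simp only [hφ]
        rw [← Finset.sum_subset (Finset.subset_univ (Finset.univ.image e))]
        · rw [Finset.sum_image (fun a _ b _ h => e.injective h)]
          simp only [hWe, hZe]
          exact hrep
        · intro j _ hj
          simp only [Finset.mem_image, Finset.mem_univ, true_and] at hj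
          simp only [hW]
          rw [dif_neg, zero_smul]
          rintro ⟨i, rfl⟩
          exact hj ⟨i, rfl⟩
  rw [← himg]
  exact hK.image hcont


lemma exists_proj {d : ℕ} {K : Set (EuclideanSpace ℝ (Fin d))} (hc : Convex ℝ K)
    (hcl : IsClosed K) (hne : K.Nonempty) :
    ∃ P : EuclideanSpace ℝ (Fin d) → EuclideanSpace ℝ (Fin d),
      (∀ z, P z ∈ K) ∧ (∀ z, ∀ w ∈ K, ⟪z - P z, w - P z⟫ ≤ 0) := by
  have h : ∀ z, ∃ v, v ∈ K ∧ ∀ w ∈ K, ⟪z - v, w - v⟫ ≤ 0 := by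
    intro z
    obtain ⟨v, hv, he⟩ := exists_norm_eq_iInf_of_complete_convex hne hcl.isComplete hc z
    exact ⟨v, hv, (norm_eq_iInf_iff_real_inner_le_zero hc hv).1 he⟩
  choose P h1 h2 using h
  exact ⟨P, h1, h2⟩

lemma integrable_aux {d : ℕ} (μ : Measure (EuclideanSpace ℝ (Fin d))) [IsFiniteMeasure μ]
    {s : Set (EuclideanSpace ℝ (Fin d))} (hcpt : IsCompact s) (hfull : μ sᶜ = 0)
    {p : ℝ} (hp : 0 < p) (S : Set (EuclideanSpace ℝ (Fin d))) :
    Integrable (fun x => infDist x S ^ p) μ := by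
  have hcont : Continuous fun x => infDist x S ^ p :=
    (continuous_infDist_pt S).rpow_const (fun x => Or.inr hp.le)
  obtain ⟨C, hC⟩ := hcpt.exists_bound_of_continuousOn hcont.continuousOn
  refine ⟨hcont.aestronglyMeasurable, HasFiniteIntegral.of_bounded (C := C) ?_⟩
  have hae : ∀ᵐ x ∂μ, x ∈ s := by
    rw [MeasureTheory.ae_iff]
    exact hfull
  filter_upwards [hae] with x hx using hC x hx


/-- The support of a measure: points all of whose neighborhoods have positive measure. -/
def msupport {d : ℕ} (μ : Measure (EuclideanSpace ℝ (Fin d))) : Set (EuclideanSpace ℝ (Fin d)) :=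
  {x | ∀ r > 0, 0 < μ (Metric.ball x r)}

/-- The average-distance energy of a curve `γ : [0,a] → ℝ^d`. -/
noncomputable def curveEnergy {d : ℕ} (μ : Measure (EuclideanSpace ℝ (Fin d)))
    (p lam a : ℝ) (γ : ℝ → EuclideanSpace ℝ (Fin d)) : ℝ :=
  (∫ x, Metric.infDist x (γ '' Set.Icc 0 a) ^ p ∂μ)
    + lam * (eVariationOn γ (Set.Icc 0 a)).toReal

/-- Any minimizer of the penalized average-distance functional has image contained in the
convex hull of the support of `μ`. -/
theorem minimizer_in_convex_hull {d : ℕ} (μ : Measure (EuclideanSpace ℝ (Fin d)))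
    [IsFiniteMeasure μ] (hpos : 0 < μ Set.univ)
    (hcpt : IsCompact (msupport μ)) (hfull : μ (msupport μ)ᶜ = 0)
    (p lam : ℝ) (hp : 1 ≤ p) (hlam : 0 < lam)
    (a : ℝ) (ha : 0 ≤ a) (γ : ℝ → EuclideanSpace ℝ (Fin d))
    (hlip : LipschitzOnWith 1 γ (Set.Icc 0 a))
    (hmin : ∀ b ψ, 0 ≤ b → LipschitzOnWith 1 ψ (Set.Icc 0 b) →
      curveEnergy μ p lam a γ ≤ curveEnergy μ p lam b ψ) :
    γ '' Set.Icc 0 a ⊆ convexHull ℝ (msupport μ) := by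
  classical
  rintro _ ⟨t₀, ht₀, rfl⟩
  by_contra hout
  have hp0 : (0:ℝ) < p := lt_of_lt_of_le one_pos hp
  -- the support and its convex hull
  have hSne : (msupport μ).Nonempty := by
    by_contra h
    rw [Set.not_nonempty_iff_eq_empty] at h
    rw [h, Set.compl_empty] at hfull
    exact absurd hfull hpos.ne'
  set K := convexHull ℝ (msupport μ) with hKdef
  have hKconv : Convex ℝ K := convex_convexHull ℝ _
  have hKcpt : IsCompact K := isCompact_convexHull_fd hcpt hSne
  have hKcl : IsClosed K := hKcpt.isClosed
  have hKne : K.Nonempty := hSne.mono (subset_convexHull ℝ _)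
  obtain ⟨P, hPmem, hPvar⟩ := exists_proj hKconv hKcl hKne
  -- basic consequences of the projection inequalities
  have hpyth : ∀ z w, ‖P z - P w‖ ^ 2 + (‖z - P z‖ - ‖w - P w‖) ^ 2 ≤ ‖z - w‖ ^ 2 :=
    fun z w => pythag z (P z) w (P w) (hPvar z _ (hPmem w)) (hPvar w _ (hPmem z))
  have hPdist : ∀ z w, dist (P z) (P w) ≤ dist z w := by
    intro z w
    rw [dist_eq_norm, dist_eq_norm]
    nlinarith [hpyth z w, sq_nonneg (‖z - P z‖ - ‖w - P w‖), norm_nonneg (P z - P w),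
      norm_nonneg (z - w)]
  have hPfix : ∀ x ∈ K, P x = x := by
    intro x hx
    have h := hPvar x x hx
    rw [real_inner_self_eq_norm_sq] at h
    have : ‖x - P x‖ = 0 := by nlinarith [norm_nonneg (x - P x)]
    rw [norm_eq_zero, sub_eq_zero] at this
    exact this.symm
  have hPclose : ∀ x ∈ K, ∀ z, dist x (P z) ^ 2 + ‖z - P z‖ ^ 2 ≤ dist x z ^ 2 := by
    intro x hx z
    have h := pythag z (P z) x x (hPvar z x hx) (by simp)
    simp only [sub_self, norm_zero, sub_zero] at h
    rw [dist_eq_norm, dist_eq_norm, ← norm_sub_rev (P z) x, ← norm_sub_rev z x] at *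
    linarith
  -- the projected curve
  set ψ : ℝ → EuclideanSpace ℝ (Fin d) := fun t => P (γ t) with hψdef
  have hψlip : LipschitzOnWith 1 ψ (Set.Icc 0 a) := by
    apply LipschitzOnWith.of_dist_le_mul
    intro x hx y hy
    calc dist (ψ x) (ψ y) ≤ dist (γ x) (γ y) := hPdist _ _
      _ ≤ 1 * dist x y := by
          simpa using hlip.dist_le_mul x hx y hy
  have hPlip : LipschitzWith 1 P := by
    apply LipschitzWith.of_dist_le_mul
    intro x y
    simpa using hPdist x y
  have hψle : ∀ s : Set ℝ, eVariationOn ψ s ≤ eVariationOn γ s := by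
    intro s
    have h := hPlip.lipschitzOnWith.comp_eVariationOn_le (Set.mapsTo_univ γ s)
    exact (by simpa using h : eVariationOn (P ∘ γ) s ≤ eVariationOn γ s)
  -- image facts
  have h0mem : (0:ℝ) ∈ Set.Icc 0 a := Set.left_mem_Icc.mpr ha
  have hΓne : (γ '' Set.Icc 0 a).Nonempty := ⟨γ 0, Set.mem_image_of_mem γ h0mem⟩
  have hΓcpt : IsCompact (γ '' Set.Icc 0 a) := isCompact_Icc.image_of_continuousOn
    hlip.continuousOn
  have hPimg : ∀ t ∈ Set.Icc 0 a, P (γ t) ∈ ψ '' Set.Icc 0 a :=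
    fun t ht => Set.mem_image_of_mem ψ ht
  have haeS : ∀ᵐ x ∂μ, x ∈ msupport μ := by
    rw [MeasureTheory.ae_iff]
    exact hfull
  have hsubK : msupport μ ⊆ K := subset_convexHull ℝ _
  -- weak comparison of distance terms
  have hdist_le : ∀ x ∈ K, infDist x (ψ '' Set.Icc 0 a) ≤ infDist x (γ '' Set.Icc 0 a) := by
    intro x hx
    obtain ⟨z, hz, hzd⟩ := hΓcpt.exists_infDist_eq_dist hΓne x
    obtain ⟨t, ht, rfl⟩ := hz
    have h1 : infDist x (ψ '' Set.Icc 0 a) ≤ dist x (P (γ t)) :=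
      infDist_le_dist_of_mem (hPimg t ht)
    have h2 : dist x (P (γ t)) ≤ dist x (γ t) := by
      nlinarith [hPclose x hx (γ t), sq_nonneg ‖γ t - P (γ t)‖, dist_nonneg (x := x) (y := P (γ t)),
        dist_nonneg (x := x) (y := γ t)]
    rw [hzd]
    exact h1.trans h2
  have hint_le : ∀ᵐ x ∂μ, infDist x (ψ '' Set.Icc 0 a) ^ p ≤ infDist x (γ '' Set.Icc 0 a) ^ p := by
    filter_upwards [haeS] with x hx
    exact Real.rpow_le_rpow infDist_nonneg (hdist_le x (hsubK hx)) hp0.le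
  have hIψ : Integrable (fun x => infDist x (ψ '' Set.Icc 0 a) ^ p) μ :=
    integrable_aux μ hcpt hfull hp0 _
  have hIγ : Integrable (fun x => infDist x (γ '' Set.Icc 0 a) ^ p) μ :=
    integrable_aux μ hcpt hfull hp0 _
  have hint : (∫ x, infDist x (ψ '' Set.Icc 0 a) ^ p ∂μ)
      ≤ ∫ x, infDist x (γ '' Set.Icc 0 a) ^ p ∂μ :=
    integral_mono_ae hIψ hIγ hint_le
  -- variation finiteness
  have hVar_fin : ∀ s t : ℝ, s ∈ Set.Icc 0 a → t ∈ Set.Icc 0 a →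
      eVariationOn γ (Set.Icc s t) ≠ ⊤ := by
    intro s t hs ht
    have h := hlip.locallyBoundedVariationOn s t hs ht
    have hsub : Set.Icc s t ⊆ Set.Icc 0 a ∩ Set.Icc s t :=
      fun x hx => ⟨⟨hs.1.trans hx.1, hx.2.trans ht.2⟩, hx⟩
    exact ne_top_of_le_ne_top h (eVariationOn.mono γ hsub)
  have hVγfin : eVariationOn γ (Set.Icc 0 a) ≠ ⊤ := by
    have h := hVar_fin 0 a h0mem (Set.right_mem_Icc.mpr ha)
    exact h
  -- the strict energy comparison
  have hstrict : curveEnergy μ p lam a ψ < curveEnergy μ p lam a γ := by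
    by_cases hcase : ∃ t₁ ∈ Set.Icc 0 a, γ t₁ ∈ K
    · -- Case B : the curve touches K, the length strictly decreases
      obtain ⟨t₁, ht₁, hγt₁⟩ := hcase
      set g : ℝ → ℝ := fun t => ‖γ t - P (γ t)‖ with hgdef
      have hg₁ : g t₁ = 0 := by
        simp only [hgdef]
        rw [hPfix _ hγt₁, sub_self, norm_zero]
      have hg₀ : 0 < g t₀ := by
        simp only [hgdef]
        rw [norm_pos_iff, sub_ne_zero]
        intro h
        exact hout (h ▸ hPmem (γ t₀))
      set s' := min t₀ t₁ with hs'def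
      set t' := max t₀ t₁ with ht'def
      have hst : s' ≤ t' := min_le_max
      have hs'mem : s' ∈ Set.Icc 0 a := ⟨le_min ht₀.1 ht₁.1, (min_le_left _ _).trans ht₀.2⟩
      have ht'mem : t' ∈ Set.Icc 0 a := ⟨le_trans ht₀.1 (le_max_left _ _), max_le ht₀.2 ht₁.2⟩
      set D := g t₀ with hDdef
      have hDabs : |g t' - g s'| = D := by
        rcases le_total t₀ t₁ with h | h
        · rw [hs'def, ht'def, min_eq_left h, max_eq_right h, hg₁, zero_sub, abs_neg,
            abs_of_pos hg₀]
        · rw [hs'def, ht'def, min_eq_right h, max_eq_left h, hg₁, sub_zero, abs_of_pos hg₀]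
      have hVmidfin : eVariationOn γ (Set.Icc s' t') ≠ ⊤ := hVar_fin s' t' hs'mem ht'mem
      set V := (eVariationOn γ (Set.Icc s' t')).toReal with hVdef
      have hVnn : 0 ≤ V := ENNReal.toReal_nonneg
      have hDV : D ≤ V := by
        have h2 : (g s' - g t') ^ 2 ≤ ‖γ s' - γ t'‖ ^ 2 := by
          nlinarith [hpyth (γ s') (γ t'), sq_nonneg ‖P (γ s') - P (γ t')‖]
        have h3 : |g s' - g t'| ≤ ‖γ s' - γ t'‖ := by
          have := Real.sqrt_le_sqrt h2
          rwa [Real.sqrt_sq_eq_abs, Real.sqrt_sq (norm_nonneg _)] at this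
        have h4 : dist (γ s') (γ t') ≤ V := by
          have h5 := eVariationOn.edist_le γ (Set.left_mem_Icc.mpr hst)
            (Set.right_mem_Icc.mpr hst)
          have h6 := ENNReal.toReal_mono hVmidfin h5
          rwa [← dist_edist] at h6
        rw [abs_sub_comm] at h3
        rw [← hDabs]
        calc |g t' - g s'| ≤ ‖γ s' - γ t'‖ := h3
          _ = dist (γ s') (γ t') := (dist_eq_norm _ _).symm
          _ ≤ V := h4
      have hDpos : 0 < D := hg₀
      -- the middle-piece estimate via refined partitions
      have hmid : eVariationOn ψ (Set.Icc s' t') ≤ ENNReal.ofReal (Real.sqrt (V^2 - D^2)) := by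
        apply iSup_le
        rintro ⟨n, u, hu, us⟩
        set u' : ℕ → ℝ := fun i => if i = 0 then s' else if i ≤ n + 1 then u (i - 1) else t'
          with hu'def
        have hu'mem : ∀ i, u' i ∈ Set.Icc s' t' := by
          intro i
          simp only [hu'def]
          split
          · exact Set.left_mem_Icc.mpr hst
          · split
            · exact us _
            · exact Set.right_mem_Icc.mpr hst
        have hu'0 : u' 0 = s' := by simp [hu'def]
        have hu'last : u' (n + 2) = t' := by
          simp only [hu'def]
          rw [if_neg (by omega), if_neg (by omega)]
        have hu'mid : ∀ i, 1 ≤ i → i ≤ n + 1 → u' i = u (i - 1) := by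
          intro i h1 h2
          simp only [hu'def]
          rw [if_neg (by omega), if_pos h2]
        have hu'mono : Monotone u' := by
          intro i j hij
          rcases Nat.eq_or_lt_of_le hij with rfl | hlt
          · exact le_refl _
          by_cases hi0 : i = 0
          · subst hi0
            rw [hu'0]
            exact (hu'mem j).1
          by_cases hjbig : n + 1 < j
          · have hj : u' j = t' := by
              simp only [hu'def]
              rw [if_neg (by omega), if_neg (by omega)]
            rw [hj]
            exact (hu'mem i).2
          · rw [hu'mid i (by omega) (by omega), hu'mid j (by omega) (by omega)]
            exact hu (by omega)
        set A : ℕ → ℝ := fun i => dist (ψ (u' (i + 1))) (ψ (u' i)) with hAdef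
        set B : ℕ → ℝ := fun i => g (u' (i + 1)) - g (u' i) with hBdef
        have hAnn : ∀ i, 0 ≤ A i := fun i => dist_nonneg
        have hkey1 : ∀ i, Real.sqrt (A i ^ 2 + B i ^ 2) ≤ dist (γ (u' (i + 1))) (γ (u' i)) := by
          intro i
          have h := hpyth (γ (u' (i + 1))) (γ (u' i))
          have hAe : A i = ‖P (γ (u' (i + 1))) - P (γ (u' i))‖ := by
            simp only [hAdef, hψdef, dist_eq_norm]
          have hsum_le : A i ^ 2 + B i ^ 2 ≤ ‖γ (u' (i + 1)) - γ (u' i)‖ ^ 2 := by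
            rw [hAe]
            exact h
          calc Real.sqrt (A i ^ 2 + B i ^ 2) ≤ Real.sqrt (‖γ (u' (i + 1)) - γ (u' i)‖ ^ 2) :=
                Real.sqrt_le_sqrt hsum_le
            _ = ‖γ (u' (i + 1)) - γ (u' i)‖ := Real.sqrt_sq (norm_nonneg _)
            _ = dist (γ (u' (i + 1))) (γ (u' i)) := (dist_eq_norm _ _).symm
        have hreal : (∑ i ∈ Finset.range (n + 2), dist (γ (u' (i + 1))) (γ (u' i))) ≤ V := by
          have h := eVariationOn.sum_le (f := γ) (n := n + 2) hu'mono hu'mem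
          have heq : ENNReal.ofReal (∑ i ∈ Finset.range (n + 2), dist (γ (u' (i + 1))) (γ (u' i)))
              = ∑ i ∈ Finset.range (n + 2), edist (γ (u' (i + 1))) (γ (u' i)) := by
            rw [ENNReal.ofReal_sum_of_nonneg (fun i _ => dist_nonneg)]
            exact Finset.sum_congr rfl fun i _ => (edist_dist _ _).symm
          rw [← heq] at h
          exact (ENNReal.ofReal_le_iff_le_toReal hVmidfin).1 h
        have hkey2 : (∑ i ∈ Finset.range (n + 2), Real.sqrt (A i ^ 2 + B i ^ 2)) ≤ V :=
          le_trans (Finset.sum_le_sum fun i _ => hkey1 i) hreal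
        have hkey3 : Real.sqrt ((∑ i ∈ Finset.range (n + 2), A i) ^ 2
            + (∑ i ∈ Finset.range (n + 2), B i) ^ 2) ≤ V :=
          le_trans (minkowski_sum (n + 2) A B) hkey2
        have hBsum : (∑ i ∈ Finset.range (n + 2), B i) = g t' - g s' := by
          simp only [hBdef]
          rw [Finset.sum_range_sub (fun i => g (u' i)), hu'last, hu'0]
        have hBsq : (∑ i ∈ Finset.range (n + 2), B i) ^ 2 = D ^ 2 := by
          rw [hBsum, ← sq_abs, hDabs]
        have hAsum_nn : (0:ℝ) ≤ ∑ i ∈ Finset.range (n + 2), A i :=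
          Finset.sum_nonneg fun i _ => hAnn i
        have hAsum_le : (∑ i ∈ Finset.range (n + 2), A i) ≤ Real.sqrt (V ^ 2 - D ^ 2) :=
          sqrt_arith hBsq hAsum_nn hkey3
        -- compare the original partition sum with the refined one
        have horig : (∑ i ∈ Finset.range n, dist (ψ (u (i + 1))) (ψ (u i)))
            ≤ ∑ i ∈ Finset.range (n + 2), A i := by
          have hterm : ∀ i ∈ Finset.range n, dist (ψ (u (i + 1))) (ψ (u i)) = A (i + 1) := by
            intro i hi
            rw [Finset.mem_range] at hi
            simp only [hAdef]
            rw [hu'mid (i + 1) (by omega) (by omega), hu'mid (i + 2) (by omega) (by omega)]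
            norm_num
          rw [Finset.sum_congr rfl hterm]
          have : (∑ i ∈ Finset.range n, A (i + 1)) = ∑ i ∈ Finset.Ico 1 (n + 1), A i := by
            rw [Finset.sum_Ico_eq_sum_range]
            simp [add_comm]
          rw [this]
          apply Finset.sum_le_sum_of_subset_of_nonneg
          · intro i hi
            rw [Finset.mem_Ico] at hi
            rw [Finset.mem_range]
            omega
          · intro i _ _
            exact hAnn i
        calc (∑ i ∈ Finset.range n, edist (ψ (u (i + 1))) (ψ (u i)))
            = ENNReal.ofReal (∑ i ∈ Finset.range n, dist (ψ (u (i + 1))) (ψ (u i))) := by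
              rw [ENNReal.ofReal_sum_of_nonneg (fun i _ => dist_nonneg)]
              exact Finset.sum_congr rfl fun i _ => edist_dist _ _
          _ ≤ ENNReal.ofReal (Real.sqrt (V ^ 2 - D ^ 2)) :=
              ENNReal.ofReal_le_ofReal (le_trans horig hAsum_le)
      have hVpos : 0 < V := lt_of_lt_of_le hDpos hDV
      have hsqrt_lt : Real.sqrt (V ^ 2 - D ^ 2) < V := by
        have h1 : V ^ 2 - D ^ 2 < V ^ 2 := by nlinarith
        have h2 : (0:ℝ) ≤ V ^ 2 - D ^ 2 := by nlinarith
        calc Real.sqrt (V ^ 2 - D ^ 2) < Real.sqrt (V ^ 2) := Real.sqrt_lt_sqrt h2 h1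
          _ = V := Real.sqrt_sq hVpos.le
      have hmid_strict : eVariationOn ψ (Set.Icc s' t') < eVariationOn γ (Set.Icc s' t') := by
        calc eVariationOn ψ (Set.Icc s' t') ≤ ENNReal.ofReal (Real.sqrt (V ^ 2 - D ^ 2)) := hmid
          _ < ENNReal.ofReal V := by
              rw [ENNReal.ofReal_lt_ofReal_iff hVpos]
              exact hsqrt_lt
          _ = eVariationOn γ (Set.Icc s' t') := ENNReal.ofReal_toReal hVmidfin
      -- split the variations into three pieces
      have hsplit : ∀ f : ℝ → EuclideanSpace ℝ (Fin d),
          eVariationOn f (Set.Icc 0 a) = eVariationOn f (Set.Icc 0 s')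
            + eVariationOn f (Set.Icc s' t') + eVariationOn f (Set.Icc t' a) := by
        intro f
        have h1 := eVariationOn.Icc_add_Icc f (a := 0) (b := s') (c := a) hs'mem.1 hs'mem.2
          (s := Set.Icc 0 a) hs'mem
        have h2 := eVariationOn.Icc_add_Icc f (a := s') (b := t') (c := a) hst ht'mem.2
          (s := Set.Icc 0 a) ht'mem
        have e0 : Set.Icc (0:ℝ) a ∩ Set.Icc 0 a = Set.Icc 0 a := Set.inter_self _
        have e1 : Set.Icc (0:ℝ) a ∩ Set.Icc 0 s' = Set.Icc 0 s' :=
          Set.inter_eq_self_of_subset_right (Set.Icc_subset_Icc le_rfl hs'mem.2)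
        have e2 : Set.Icc (0:ℝ) a ∩ Set.Icc s' a = Set.Icc s' a :=
          Set.inter_eq_self_of_subset_right (Set.Icc_subset_Icc hs'mem.1 le_rfl)
        have e3 : Set.Icc (0:ℝ) a ∩ Set.Icc s' t' = Set.Icc s' t' :=
          Set.inter_eq_self_of_subset_right (Set.Icc_subset_Icc hs'mem.1 ht'mem.2)
        have e4 : Set.Icc (0:ℝ) a ∩ Set.Icc t' a = Set.Icc t' a :=
          Set.inter_eq_self_of_subset_right (Set.Icc_subset_Icc ht'mem.1 le_rfl)
        rw [e0, e1, e2] at h1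
        rw [e2, e3, e4] at h2
        rw [← h1, ← h2, add_assoc]
      have hfin1 : eVariationOn γ (Set.Icc 0 s') ≠ ⊤ := hVar_fin 0 s' h0mem hs'mem
      have hfin3 : eVariationOn γ (Set.Icc t' a) ≠ ⊤ := hVar_fin t' a ht'mem
        (Set.right_mem_Icc.mpr ha)
      have hlt : eVariationOn ψ (Set.Icc 0 a) < eVariationOn γ (Set.Icc 0 a) := by
        rw [hsplit ψ, hsplit γ]
        have l1 := hψle (Set.Icc 0 s')
        have l3 := hψle (Set.Icc t' a)
        calc eVariationOn ψ (Set.Icc 0 s') + eVariationOn ψ (Set.Icc s' t')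
              + eVariationOn ψ (Set.Icc t' a)
            ≤ eVariationOn γ (Set.Icc 0 s') + eVariationOn ψ (Set.Icc s' t')
              + eVariationOn γ (Set.Icc t' a) := by
              exact add_le_add (add_le_add l1 (le_refl _)) l3
          _ < eVariationOn γ (Set.Icc 0 s') + eVariationOn γ (Set.Icc s' t')
              + eVariationOn γ (Set.Icc t' a) := by
              apply ENNReal.add_lt_add_of_lt_of_le hfin3 _ (le_refl _)
              exact ENNReal.add_lt_add_of_le_of_lt hfin1 (le_refl _) hmid_strict
      have hlen : lam * (eVariationOn ψ (Set.Icc 0 a)).toReal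
          < lam * (eVariationOn γ (Set.Icc 0 a)).toReal := by
        apply mul_lt_mul_of_pos_left _ hlam
        apply ENNReal.toReal_strict_mono hVγfin hlt
      simp only [curveEnergy]
      exact add_lt_add_of_le_of_lt hint hlen
    · -- Case A : the curve stays away from K, the distance term strictly decreases
      push_neg at hcase
      obtain ⟨tm, htm, hminOn⟩ := isCompact_Icc.exists_isMinOn ⟨0, h0mem⟩
        ((continuous_infDist_pt K).comp_continuousOn hlip.continuousOn)
      set ε := infDist (γ tm) K with hεdef
      have hεpos : 0 < ε := by
        rw [hεdef]
        rw [← (hKcl.notMem_iff_infDist_pos hKne)]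
        exact hcase tm htm
      have hstrict_ae : ∀ᵐ x ∂μ, infDist x (ψ '' Set.Icc 0 a) ^ p
          < infDist x (γ '' Set.Icc 0 a) ^ p := by
        filter_upwards [haeS] with x hx
        have hxK : x ∈ K := hsubK hx
        obtain ⟨z, hz, hzd⟩ := hΓcpt.exists_infDist_eq_dist hΓne x
        obtain ⟨t, ht, rfl⟩ := hz
        have hzd' : ε ≤ ‖γ t - P (γ t)‖ := by
          calc ε ≤ infDist (γ t) K := hminOn ht
            _ ≤ dist (γ t) (P (γ t)) := infDist_le_dist_of_mem (hPmem _)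
            _ = ‖γ t - P (γ t)‖ := dist_eq_norm _ _
        have hlt : dist x (P (γ t)) < dist x (γ t) := by
          nlinarith [hPclose x hxK (γ t), dist_nonneg (x := x) (y := P (γ t)),
            dist_nonneg (x := x) (y := γ t)]
        have h1 : infDist x (ψ '' Set.Icc 0 a) < infDist x (γ '' Set.Icc 0 a) := by
          rw [hzd]
          exact lt_of_le_of_lt (infDist_le_dist_of_mem (hPimg t ht)) hlt
        exact Real.rpow_lt_rpow infDist_nonneg h1 hp0
      have hintlt : (∫ x, infDist x (ψ '' Set.Icc 0 a) ^ p ∂μ)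
          < ∫ x, infDist x (γ '' Set.Icc 0 a) ^ p ∂μ := by
        rcases lt_or_ge (∫ x, infDist x (ψ '' Set.Icc 0 a) ^ p ∂μ)
          (∫ x, infDist x (γ '' Set.Icc 0 a) ^ p ∂μ) with h | h
        · exact h
        · exfalso
          have heq : (∫ x, infDist x (ψ '' Set.Icc 0 a) ^ p ∂μ)
              = ∫ x, infDist x (γ '' Set.Icc 0 a) ^ p ∂μ := le_antisymm hint h
          have h0 : (∫ x, (infDist x (γ '' Set.Icc 0 a) ^ p
              - infDist x (ψ '' Set.Icc 0 a) ^ p) ∂μ) = 0 := by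
            rw [integral_sub hIγ hIψ]
            linarith
          have hnn : 0 ≤ᵐ[μ] fun x => infDist x (γ '' Set.Icc 0 a) ^ p
              - infDist x (ψ '' Set.Icc 0 a) ^ p := by
            filter_upwards [hstrict_ae] with x hx
            show (0:ℝ) ≤ infDist x (γ '' Set.Icc 0 a) ^ p - infDist x (ψ '' Set.Icc 0 a) ^ p
            linarith
          have hz := (integral_eq_zero_iff_of_nonneg_ae hnn (hIγ.sub hIψ)).1 h0
          have hfalse : ∀ᵐ _x ∂μ, False := by
            filter_upwards [hstrict_ae, hz] with x hx hx2
            have hx2' : infDist x (γ '' Set.Icc 0 a) ^ p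
                - infDist x (ψ '' Set.Icc 0 a) ^ p = 0 := hx2
            linarith
          rw [MeasureTheory.ae_iff] at hfalse
          have huniv : μ Set.univ = 0 := by
            simpa using hfalse
          exact absurd huniv hpos.ne'
      have hlen : lam * (eVariationOn ψ (Set.Icc 0 a)).toReal
          ≤ lam * (eVariationOn γ (Set.Icc 0 a)).toReal := by
        apply mul_le_mul_of_nonneg_left _ hlam.le
        exact ENNReal.toReal_mono hVγfin (hψle _)
      simp only [curveEnergy]
      exact add_lt_add_of_lt_of_le hintlt hlen
  exact absurd (hmin a ψ ha hψlip) (not_le.mpr hstrict)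
end

section
/- If an arc-length parameterized curve γ : [0,L] → ℝ^2 has γ' of total variation less than 1/2 on an interval I = (t, t+δ) and γ'(t+) = e_1, then γ restricted to the closure of I is injective, and indeed the first coordinate γ_1 is strictly increasing on I with γ_1'(s) > 7/8 a.e. -/
open MeasureTheory Set

open scoped RealInnerProductSpace


lemma lemM (f F : ℝ → ℝ) (hf : Monotone f) (hc : Continuous f) {a b : ℝ} (hab : a ≤ b)
    (c : ℝ)
    (hF : ∀ᵐ s ∂(volume.restrict (Set.Ioo a b)), HasDerivAt f (F s) s ∧ c ≤ F s) :
    c * (b - a) ≤ f b - f a := by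
  rcases le_or_gt c 0 with hc0 | hc0
  · have : 0 ≤ f b - f a := sub_nonneg.2 (hf hab)
    nlinarith [sub_nonneg.2 hab]
  · set S : StieltjesFunction ℝ := ⟨f, hf, fun x => (hc.continuousAt).continuousWithinAt⟩ with hS
    have hae : ∀ᵐ x ∂(volume.restrict (Set.Ioo a b)),
        HasDerivAt f (S.measure.rnDeriv volume x).toReal x :=
      ae_restrict_of_ae S.ae_hasDerivAt
    have hfin : ∀ᵐ x ∂(volume.restrict (Set.Ioo a b)),
        S.measure.rnDeriv volume x < ⊤ :=
      ae_restrict_of_ae (Measure.rnDeriv_lt_top _ _)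
    have hge : ∀ᵐ x ∂(volume.restrict (Set.Ioo a b)),
        ENNReal.ofReal c ≤ S.measure.rnDeriv volume x := by
      filter_upwards [hae, hfin, hF] with x h1 h2 h3
      have heq : (S.measure.rnDeriv volume x).toReal = F x := h1.unique h3.1
      rw [← ENNReal.ofReal_toReal h2.ne]
      exact ENNReal.ofReal_le_ofReal (heq ▸ h3.2)
    have h1 : ENNReal.ofReal c * ENNReal.ofReal (b - a)
        ≤ ∫⁻ x in Set.Ioo a b, S.measure.rnDeriv volume x := by
      calc ENNReal.ofReal c * ENNReal.ofReal (b - a)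
          = ∫⁻ _ in Set.Ioo a b, ENNReal.ofReal c := by
            rw [setLIntegral_const, Real.volume_Ioo]
        _ ≤ _ := lintegral_mono_ae hge
    have h2 : (∫⁻ x in Set.Ioo a b, S.measure.rnDeriv volume x) ≤ S.measure (Set.Ioo a b) := by
      have := Measure.withDensity_rnDeriv_le S.measure volume (Set.Ioo a b)
      rwa [withDensity_apply _ measurableSet_Ioo] at this
    have h3 : S.measure (Set.Ioo a b) ≤ ENNReal.ofReal (f b - f a) := by
      calc S.measure (Set.Ioo a b) ≤ S.measure (Set.Ioc a b) := measure_mono Ioo_subset_Ioc_self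
        _ = ENNReal.ofReal (f b - f a) := S.measure_Ioc a b
    have : ENNReal.ofReal (c * (b - a)) ≤ ENNReal.ofReal (f b - f a) := by
      rw [ENNReal.ofReal_mul hc0.le]
      exact (h1.trans h2).trans h3
    exact (ENNReal.ofReal_le_ofReal_iff (sub_nonneg.2 (hf hab))).1 this

lemma key_ineq {L t δ : ℝ} (ht : 0 ≤ t) (hδ : 0 < δ) (htδ : t + δ ≤ L)
    (γ g : ℝ → EuclideanSpace ℝ (Fin 2))
    (hlip : LipschitzOnWith 1 γ (Set.Icc 0 L))
    (hderiv : ∀ᵐ s ∂(volume.restrict (Set.Icc 0 L)), HasDerivAt γ (g s) s ∧ ‖g s‖ = 1)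
    {a b : ℝ} (hta : t ≤ a) (hab : a ≤ b) (hbδ : b ≤ t + δ)
    (u : EuclideanSpace ℝ (Fin 2)) (hu : ‖u‖ ≤ 1) (c : ℝ)
    (hc : ∀ᵐ s ∂(volume.restrict (Set.Ioo a b)), c ≤ ⟪u, g s⟫) :
    c * (b - a) ≤ ⟪u, γ b⟫ - ⟪u, γ a⟫ := by
  have hL : 0 ≤ L := le_trans (by linarith) htδ
  set Q : ℝ → ℝ := fun s => min (max s 0) L with hQ
  have hQmem : ∀ s, Q s ∈ Set.Icc 0 L := fun s =>
    ⟨le_min (le_max_right s 0) hL, min_le_right _ _⟩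
  have hQid : ∀ s ∈ Set.Icc 0 L, Q s = s := fun s hs => by
    simp [hQ, max_eq_left hs.1, min_eq_left hs.2]
  have hQmono : Monotone Q := fun x y hxy =>
    min_le_min (max_le_max hxy le_rfl) le_rfl
  have hQlip : ∀ x y : ℝ, |Q x - Q y| ≤ |x - y| := fun x y => by
    refine (abs_min_sub_min_le_max _ _ _ _).trans ?_
    simpa using abs_max_sub_max_le_abs x y 0
  have hQcont : Continuous Q :=
    (continuous_id.max continuous_const).min continuous_const
  have hinner_lip : ∀ x y : ℝ, |⟪u, γ (Q x)⟫ - ⟪u, γ (Q y)⟫| ≤ |x - y| := by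
    intro x y
    rw [← inner_sub_right]
    calc |⟪u, γ (Q x) - γ (Q y)⟫| ≤ ‖u‖ * ‖γ (Q x) - γ (Q y)‖ := abs_real_inner_le_norm _ _
      _ ≤ 1 * ‖γ (Q x) - γ (Q y)‖ := by
          have : (0:ℝ) ≤ ‖γ (Q x) - γ (Q y)‖ := norm_nonneg _
          nlinarith
      _ = dist (γ (Q x)) (γ (Q y)) := by rw [one_mul, dist_eq_norm]
      _ ≤ 1 * dist (Q x) (Q y) := by
          simpa using hlip.dist_le_mul (Q x) (hQmem x) (Q y) (hQmem y)
      _ ≤ |x - y| := by rw [one_mul, Real.dist_eq]; exact hQlip x y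
  set Φ : ℝ → ℝ := fun s => ⟪u, γ (Q s)⟫ + s with hΦ
  have hΦmono : Monotone Φ := by
    intro x y hxy
    have h1 := (abs_le.1 (hinner_lip y x)).1
    have h2 : Q y - Q x ≤ y - x :=
      le_trans (le_abs_self _) (le_trans (hQlip y x) (le_of_eq (abs_of_nonneg (sub_nonneg.2 hxy))))
    simp only [hΦ]
    have := (abs_le.1 (hinner_lip y x)).1
    rw [abs_of_nonneg (sub_nonneg.2 hxy)] at this
    linarith
  have hΦcont : Continuous Φ := by
    refine Continuous.add ?_ continuous_id
    exact continuous_const.inner (hlip.continuousOn.comp_continuous hQcont hQmem)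
  have hsub1 : Set.Ioo a b ⊆ Set.Icc 0 L := fun x hx =>
    ⟨by linarith [hx.1], by linarith [hx.2]⟩
  have hF : ∀ᵐ s ∂(volume.restrict (Set.Ioo a b)),
      HasDerivAt Φ (⟪u, g s⟫ + 1) s ∧ c + 1 ≤ ⟪u, g s⟫ + 1 := by
    filter_upwards [ae_restrict_of_ae_restrict_of_subset hsub1 hderiv, hc,
      ae_restrict_mem measurableSet_Ioo] with s hs1 hs2 hs3
    have hsIoo : s ∈ Set.Ioo (0:ℝ) L := ⟨by linarith [hs3.1], by linarith [hs3.2]⟩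
    constructor
    · have h0 : HasDerivAt (fun x => ⟪u, γ x⟫ + x) (⟪u, g s⟫ + 1) s := by
        have := ((innerSL ℝ u).hasFDerivAt.comp_hasDerivAt s hs1.1).add (hasDerivAt_id s)
        exact this
      have heq : Φ =ᶠ[nhds s] fun x => ⟪u, γ x⟫ + x := by
        filter_upwards [isOpen_Ioo.mem_nhds hsIoo] with x hx
        simp [hΦ, hQid x ⟨hx.1.le, hx.2.le⟩]
      exact heq.hasDerivAt_iff.2 h0
    · linarith
  have := lemM Φ (fun s => ⟪u, g s⟫ + 1) hΦmono hΦcont hab (c + 1) hF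
  have ha' : Q a = a := hQid a ⟨le_trans ht hta, by linarith⟩
  have hb' : Q b = b := hQid b ⟨by linarith, by linarith⟩
  simp only [hΦ, ha', hb'] at this
  nlinarith [this]

/-- If an arc-length-parameterized planar curve has tangent of total variation less
than `1/2` on `I = (t, t+δ)` and right derivative `e₁` at `t`, then `γ` is injective
on the closure of `I`; indeed the first coordinate of `γ` is strictly increasing there,
with a.e. derivative of first coordinate greater than `7/8` on `I`. -/
theorem small_turning_injective {L t δ : ℝ} (ht : 0 ≤ t) (hδ : 0 < δ) (htδ : t + δ ≤ L)
    (γ g : ℝ → EuclideanSpace ℝ (Fin 2))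
    (hlip : LipschitzOnWith 1 γ (Set.Icc 0 L))
    (hderiv : ∀ᵐ s ∂(volume.restrict (Set.Icc 0 L)), HasDerivAt γ (g s) s ∧ ‖g s‖ = 1)
    (hright : HasDerivWithinAt γ (EuclideanSpace.single (0 : Fin 2) (1 : ℝ)) (Set.Ici t) t)
    (hTV : eVariationOn g (Set.Ioo t (t + δ)) < ENNReal.ofReal (1 / 2)) :
    Set.InjOn γ (Set.Icc t (t + δ)) ∧
    StrictMonoOn (fun s => γ s 0) (Set.Icc t (t + δ)) ∧
    (∀ᵐ s ∂(volume.restrict (Set.Ioo t (t + δ))), 7 / 8 < g s 0) := by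
  set e₁ : EuclideanSpace ℝ (Fin 2) := EuclideanSpace.single (0 : Fin 2) (1 : ℝ) with he₁
  set V : ℝ := (eVariationOn g (Set.Ioo t (t + δ))).toReal with hVdef
  have hVfin : eVariationOn g (Set.Ioo t (t + δ)) ≠ ⊤ := (hTV.trans ENNReal.ofReal_lt_top).ne
  have hV0 : 0 ≤ V := ENNReal.toReal_nonneg
  have hVlt : V < 1 / 2 := by
    have h := (ENNReal.toReal_lt_toReal hVfin ENNReal.ofReal_ne_top).2 hTV
    rwa [ENNReal.toReal_ofReal (by norm_num)] at h
  -- pointwise total variation bound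
  have hgV : ∀ s₁ ∈ Set.Ioo t (t + δ), ∀ s₂ ∈ Set.Ioo t (t + δ), ‖g s₁ - g s₂‖ ≤ V := by
    intro s₁ hs₁ s₂ hs₂
    have h := eVariationOn.edist_le g hs₁ hs₂
    have := (ENNReal.toReal_le_toReal (edist_ne_top _ _) hVfin).2 h
    rwa [← dist_eq_norm, dist_edist]
  have hsubIcc : Set.Ioo t (t + δ) ⊆ Set.Icc 0 L := fun x hx =>
    ⟨by linarith [hx.1], by linarith [hx.2]⟩
  -- every value of g on the open interval is V-close to e₁
  have hclose : ∀ s₀ ∈ Set.Ioo t (t + δ), dist e₁ (g s₀) ≤ V := by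
    intro s₀ hs₀
    have hw : ∀ b ∈ Set.Ioo t (t + δ), ‖γ b - γ t - (b - t) • g s₀‖ ≤ V * (b - t) := by
      intro b hb
      set w : EuclideanSpace ℝ (Fin 2) := γ b - γ t - (b - t) • g s₀ with hwdef
      rcases eq_or_ne w 0 with h0 | h0
      · rw [h0, norm_zero]
        have : (0:ℝ) ≤ b - t := by linarith [hb.1]
        positivity
      · set u : EuclideanSpace ℝ (Fin 2) := -(‖w‖⁻¹ • w) with hudef
        have hwn : (0:ℝ) < ‖w‖ := norm_pos_iff.2 h0
        have hu : ‖u‖ ≤ 1 := by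
          rw [hudef, norm_neg, norm_smul, norm_inv, norm_norm, inv_mul_cancel₀ hwn.ne']
        have hc : ∀ᵐ s ∂(volume.restrict (Set.Ioo t b)),
            ⟪u, g s₀⟫ - V ≤ ⟪u, g s⟫ := by
          filter_upwards [ae_restrict_mem measurableSet_Ioo] with s hs
          have hsmem : s ∈ Set.Ioo t (t + δ) := ⟨hs.1, lt_of_lt_of_le hs.2 hb.2.le⟩
          have h1 : |⟪u, g s⟫ - ⟪u, g s₀⟫| ≤ V := by
            rw [← inner_sub_right]
            calc |⟪u, g s - g s₀⟫| ≤ ‖u‖ * ‖g s - g s₀‖ := abs_real_inner_le_norm _ _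
              _ ≤ 1 * V := by
                  have := hgV s hsmem s₀ hs₀
                  have h2 : (0:ℝ) ≤ ‖g s - g s₀‖ := norm_nonneg _
                  nlinarith
              _ = V := one_mul V
          linarith [(abs_le.1 h1).1]
        have hkey := key_ineq ht hδ htδ γ g hlip hderiv le_rfl hb.1.le hb.2.le u hu
          (⟪u, g s₀⟫ - V) hc
        -- ⟪u, γ b⟫ - ⟪u, γ t⟫ = ⟪u, w⟫ + (b - t) * ⟪u, g s₀⟫
        have hexp : ⟪u, γ b⟫ - ⟪u, γ t⟫ = ⟪u, w⟫ + (b - t) * ⟪u, g s₀⟫ := by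
          rw [hwdef, inner_sub_right, inner_sub_right, real_inner_smul_right]
          ring
        have huw : ⟪u, w⟫ = -‖w‖ := by
          rw [hudef, inner_neg_left, real_inner_smul_left, real_inner_self_eq_norm_sq]
          field_simp
        rw [hexp, huw] at hkey
        nlinarith [hkey]
    -- slope tends to e₁
    have hslope := hasDerivWithinAt_iff_tendsto_slope.1 hright
    rw [Set.Ici_sdiff_left] at hslope
    have hev : ∀ᶠ y in nhdsWithin t (Set.Ioi t),
        slope γ t y ∈ Metric.closedBall (g s₀) V := by
      filter_upwards [Ioo_mem_nhdsGT_of_mem (show t ∈ Set.Ico t (t + δ) from ⟨le_refl t, by linarith⟩)] with y hy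
      have hyt : (0:ℝ) < y - t := by linarith [hy.1]
      rw [Metric.mem_closedBall, dist_eq_norm, slope_def_module]
      have heq2 : (y - t)⁻¹ • (γ y - γ t - (y - t) • g s₀)
          = (y - t)⁻¹ • (γ y - γ t) - g s₀ := by
        rw [smul_sub, smul_smul, inv_mul_cancel₀ hyt.ne', one_smul]
      rw [← heq2, norm_smul, norm_inv, Real.norm_eq_abs, abs_of_pos hyt]
      calc (y - t)⁻¹ * ‖γ y - γ t - (y - t) • g s₀‖ ≤ (y - t)⁻¹ * (V * (y - t)) := by
            apply mul_le_mul_of_nonneg_left (hw y hy) (by positivity)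
        _ = V := by field_simp
    have hmem : e₁ ∈ Metric.closedBall (g s₀) V :=
      Metric.isClosed_closedBall.mem_of_tendsto hslope hev
    rwa [Metric.mem_closedBall] at hmem
  -- part 3
  have part3 : ∀ᵐ s ∂(volume.restrict (Set.Ioo t (t + δ))), 7 / 8 < g s 0 := by
    filter_upwards [ae_restrict_of_ae_restrict_of_subset hsubIcc hderiv,
      ae_restrict_mem measurableSet_Ioo] with s hs1 hs2
    have h1 : ‖e₁ - g s‖ ≤ V := by
      have := hclose s hs2
      rwa [dist_eq_norm] at this
    have hinner : ⟪e₁, g s⟫ = g s 0 := by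
      rw [he₁, EuclideanSpace.inner_single_left]
      simp
    have hne1 : ‖e₁‖ = 1 := by
      rw [he₁, EuclideanSpace.norm_single]
      norm_num
    have hsq : ‖e₁ - g s‖ ^ 2 = 2 - 2 * g s 0 := by
      rw [norm_sub_sq_real, hinner, hne1, hs1.2]
      ring
    nlinarith [norm_nonneg (e₁ - g s), h1, hV0, hVlt]
  -- part 2
  have part2 : StrictMonoOn (fun s => γ s 0) (Set.Icc t (t + δ)) := by
    intro x hx y hy hxy
    have hc : ∀ᵐ s ∂(volume.restrict (Set.Ioo x y)), (7:ℝ)/8 ≤ ⟪e₁, g s⟫ := by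
      have hsub2 : Set.Ioo x y ⊆ Set.Ioo t (t + δ) := fun z hz =>
        ⟨lt_of_le_of_lt hx.1 hz.1, lt_of_lt_of_le hz.2 hy.2⟩
      filter_upwards [ae_restrict_of_ae_restrict_of_subset hsub2 part3] with s hs
      rw [he₁, EuclideanSpace.inner_single_left]
      simpa using hs.le
    have hne1 : ‖e₁‖ ≤ 1 := by
      rw [he₁, EuclideanSpace.norm_single]; norm_num
    have hkey := key_ineq ht hδ htδ γ g hlip hderiv hx.1 hxy.le hy.2 e₁ hne1 (7/8) hc
    have hgx : ⟪e₁, γ x⟫ = γ x 0 := by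
      rw [he₁, EuclideanSpace.inner_single_left]; simp
    have hgy : ⟪e₁, γ y⟫ = γ y 0 := by
      rw [he₁, EuclideanSpace.inner_single_left]; simp
    rw [hgx, hgy] at hkey
    simp only []
    nlinarith [hkey]
  refine ⟨?_, part2, part3⟩
  intro x hx y hy hxy
  by_contra hne
  rcases lt_or_gt_of_ne hne with h | h
  · have := part2 hx hy h
    simp only [] at this
    rw [hxy] at this
    exact lt_irrefl _ this
  · have := part2 hy hx h
    simp only [] at this
    rw [hxy] at this
    exact lt_irrefl _ this
end
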